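/- A linear map Λ from M_n(ℂ) to M_m(ℂ) is positivity-preserving (maps PSD matrices to PSD matrices) if and only if its Choi matrix C(Λ) is positive on product vectors, i.e. for all v ∈ ℂ^m and w ∈ ℂ^n, the vector u = v ⊗ w (with u_{(i,k)} = v_i · w_k) satisfies ⟨u, C(Λ) u⟩ ≥ 0. -/

import Mathlib

open scoped Kronecker ComplexOrder
open Matrix
open scoped MatrixOrder

/-- The Choi matrix of a linear map `Λ : M_n(ℂ) → M_m(ℂ)`:
`C(Λ) = ∑ i j, Λ(E i j) ⊗ₖ E i j`, a matrix indexed by `Fin m × Fin n`. -/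
noncomputable def choi {n m : ℕ}
    (Λ : Matrix (Fin n) (Fin n) ℂ →ₗ[ℂ] Matrix (Fin m) (Fin m) ℂ) :
    Matrix (Fin m × Fin n) (Fin m × Fin n) ℂ :=
  ∑ i : Fin n, ∑ j : Fin n,
    (Λ (Matrix.single i j 1)) ⊗ₖ (Matrix.single i j 1)

/-- `Λ ⊗ id_N` : the unique linear map with `(Λ ⊗ id_N)(A ⊗ₖ B) = Λ(A) ⊗ₖ B`,
written out explicitly. -/
noncomputable def tensorId {n m : ℕ}
    (Λ : Matrix (Fin n) (Fin n) ℂ →ₗ[ℂ] Matrix (Fin m) (Fin m) ℂ) (N : ℕ)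
    (M : Matrix (Fin n × Fin N) (Fin n × Fin N) ℂ) :
    Matrix (Fin m × Fin N) (Fin m × Fin N) ℂ :=
  Matrix.of fun p q => Λ (Matrix.of fun i j => M (i, p.2) (j, q.2)) p.1 q.1

/-- `Λ` is `N`-positive: `Λ ⊗ id_N` maps PSD matrices to PSD matrices. -/
def NPos {n m : ℕ}
    (Λ : Matrix (Fin n) (Fin n) ℂ →ₗ[ℂ] Matrix (Fin m) (Fin m) ℂ) (N : ℕ) : Prop :=
  ∀ M : Matrix (Fin n × Fin N) (Fin n × Fin N) ℂ,
    M.PosSemidef → (tensorId Λ N M).PosSemidef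

/-- `Λ` is completely positive: `N`-positive for every `N ≥ 1`. -/
def CP {n m : ℕ}
    (Λ : Matrix (Fin n) (Fin n) ℂ →ₗ[ℂ] Matrix (Fin m) (Fin m) ℂ) : Prop :=
  ∀ N : ℕ, 1 ≤ N → NPos Λ N

lemma choi_quadratic {n m : ℕ}
    (Λ : Matrix (Fin n) (Fin n) ℂ →ₗ[ℂ] Matrix (Fin m) (Fin m) ℂ)
    (v : Fin m → ℂ) (w : Fin n → ℂ) :
    dotProduct (star fun p : Fin m × Fin n => v p.1 * w p.2)
        ((choi Λ).mulVec fun p : Fin m × Fin n => v p.1 * w p.2)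
    = dotProduct (star v)
        ((Λ (Matrix.of fun i j => (starRingEnd ℂ) (w i) * w j)).mulVec v) := by
  have hA : (Matrix.of fun i j => (starRingEnd ℂ) (w i) * w j)
      = ∑ i : Fin n, ∑ j : Fin n,
        ((starRingEnd ℂ) (w i) * w j) • Matrix.single i j (1:ℂ) := by
    ext i j
    simp [Matrix.single, Matrix.sum_apply, ite_and, Finset.sum_ite_eq']
  rw [hA]
  simp only [map_sum, LinearMap.map_smul, choi]
  simp [dotProduct, Matrix.mulVec, Matrix.sum_apply, Fintype.sum_prod_type,
    Matrix.single, Finset.mul_sum, Finset.sum_mul, mul_ite, ite_mul,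
    Matrix.kroneckerMap_apply, apply_ite, ite_and, Finset.sum_ite_eq']
  refine Finset.sum_congr rfl fun x _ => ?_
  rw [Finset.sum_comm]
  refine Finset.sum_congr rfl fun a _ => Finset.sum_congr rfl fun b _ =>
    Finset.sum_congr rfl fun c _ => ?_
  ring

lemma posSemidef_of_nonneg {k : ℕ} (M : Matrix (Fin k) (Fin k) ℂ)
    (h : ∀ x : Fin k → ℂ, 0 ≤ dotProduct (star x) (M.mulVec x)) :
    M.PosSemidef := by
  refine Matrix.PosSemidef.of_dotProduct_mulVec_nonneg ?_ h
  rw [Matrix.isHermitian_iff_isSymmetric,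
    LinearMap.isSymmetric_iff_inner_map_self_real]
  intro x
  have h1 : inner ℂ (Matrix.toEuclideanLin M x) x
      = (starRingEnd ℂ) (dotProduct (star ((WithLp.equiv 2 _) x))
          (M.mulVec ((WithLp.equiv 2 _) x))) := by
    rw [← inner_conj_symm]
    congr 1
    rw [EuclideanSpace.inner_eq_star_dotProduct]
    exact dotProduct_comm _ _
  have h2 := h ((WithLp.equiv 2 _) x)
  obtain ⟨hre, him⟩ := Complex.le_def.mp h2
  have him0 : (dotProduct (star ((WithLp.equiv 2 _) x))
      (M.mulVec ((WithLp.equiv 2 _) x))).im = 0 := by simpa using him.symm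
  rw [h1]
  simp only [WithLp.equiv_apply] at him0
  apply Complex.ext <;> simp [him0]

lemma outer_posSemidef {n : ℕ} (w : Fin n → ℂ) :
    (Matrix.of fun i j => (starRingEnd ℂ) (w i) * w j).PosSemidef := by
  have : (Matrix.of fun i j => (starRingEnd ℂ) (w i) * w j)
      = (Matrix.of fun (_ : Fin 1) j => w j)ᴴ * (Matrix.of fun (_ : Fin 1) j => w j) := by
    ext i j
    simp [Matrix.mul_apply, Matrix.conjTranspose_apply]
  rw [this]
  exact Matrix.posSemidef_conjTranspose_mul_self _

/-- `Λ` is positivity-preserving iff its Choi matrix is positive on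
product vectors `u = v ⊗ w`. -/
theorem pos_preserving_iff_choi_pos_on_product_vectors {n m : ℕ}
    (Λ : Matrix (Fin n) (Fin n) ℂ →ₗ[ℂ] Matrix (Fin m) (Fin m) ℂ) :
    (∀ A : Matrix (Fin n) (Fin n) ℂ, A.PosSemidef → (Λ A).PosSemidef) ↔
      (∀ (v : Fin m → ℂ) (w : Fin n → ℂ),
        0 ≤ dotProduct (star fun p : Fin m × Fin n => v p.1 * w p.2)
            ((choi Λ).mulVec fun p : Fin m × Fin n => v p.1 * w p.2)) := by
  constructor
  · intro hpos v w
    rw [choi_quadratic]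
    exact (hpos _ (outer_posSemidef w)).dotProduct_mulVec_nonneg v
  · intro hc A hA
    apply posSemidef_of_nonneg
    intro x
    have hAeq : A = ∑ k : Fin n,
        Matrix.of fun i j => (starRingEnd ℂ) (CFC.sqrt A k i) * CFC.sqrt A k j := by
      ext i j
      have := CFC.sqrt_mul_sqrt_self A hA.nonneg
      calc A i j = (CFC.sqrt A * CFC.sqrt A) i j := by rw [this]
        _ = ∑ k, CFC.sqrt A i k * CFC.sqrt A k j := Matrix.mul_apply
        _ = _ := by
            rw [Matrix.sum_apply]
            refine Finset.sum_congr rfl fun k _ => ?_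
            rw [Matrix.of_apply, ← (CFC.sqrt_nonneg A).posSemidef.1.apply i k]
            simp [Matrix.conjTranspose_apply]
    rw [hAeq, map_sum]
    have hsum : dotProduct (star x)
        ((∑ k : Fin n, Λ (Matrix.of fun i j =>
            (starRingEnd ℂ) (CFC.sqrt A k i) * CFC.sqrt A k j)).mulVec x)
        = ∑ k : Fin n, dotProduct (star x)
            ((Λ (Matrix.of fun i j =>
              (starRingEnd ℂ) (CFC.sqrt A k i) * CFC.sqrt A k j)).mulVec x) := by
      simp only [dotProduct, Matrix.mulVec, Matrix.sum_apply,
        Finset.mul_sum, Finset.sum_mul]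
      refine Eq.trans (Finset.sum_congr rfl fun a _ => Finset.sum_comm) ?_
      exact Finset.sum_comm
    rw [hsum]
    refine Finset.sum_nonneg fun k _ => ?_
    have := hc x (fun j => CFC.sqrt A k j)
    rwa [choi_quadratic] at this
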